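/- Let K : ℝ → ℝ be defined by K(x) = 2cos(x)/(π² − 4x²) for x ≠ ±π/2, with K(±π/2) = 1/(2π). Then K ∈ L¹(ℝ) and its Fourier transform satisfies K̂(t) = ∫_ℝ e^{−ixt} K(x) dx = cos(πt/2) for |t| ≤ 1 and K̂(t) = 0 for |t| ≥ 1. -/

import Mathlib

open MeasureTheory Filter FourierTransform Real Set

/-- The extremal kernel `K(x) = 2cos(x)/(π² − 4x²)`, extended continuously by
the value `1/(2π)` at its removable singularities `x = ±π/2`. -/
noncomputable def Kker (x : ℝ) : ℝ :=
  if x = Real.pi / 2 ∨ x = -(Real.pi / 2) then 1 / (2 * Real.pi)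
  else 2 * Real.cos x / (Real.pi ^ 2 - 4 * x ^ 2)

noncomputable def gfun (t : ℝ) : ℂ :=
  if |t| ≤ 1 then (Real.cos (Real.pi * t / 2) : ℂ) else 0

lemma gfun_cont : Continuous gfun := by
  apply Continuous.if_le
  · fun_prop
  · fun_prop
  · exact continuous_abs
  · exact continuous_const
  · intro a ha
    rcases (abs_eq (by norm_num : (0:ℝ) ≤ 1)).1 ha with h | h <;>
      simp [h, mul_div_assoc, neg_div, Real.cos_pi_div_two, Complex.cos_neg, Complex.cos_pi_div_two]

lemma gfun_supp : ∀ t : ℝ, t ∉ Icc (-1:ℝ) 1 → gfun t = 0 := by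
  intro t ht
  rw [Set.mem_Icc, not_and_or] at ht
  have : ¬ |t| ≤ 1 := by rcases ht with h | h <;> [skip; skip] <;> rw [abs_le] <;> tauto
  simp [gfun, this]

lemma gfun_integrable : Integrable gfun :=
  gfun_cont.integrable_of_hasCompactSupport
    (HasCompactSupport.intro isCompact_Icc gfun_supp)

open intervalIntegral in
lemma exp_int (r : ℝ) : (∫ t in (-1:ℝ)..1, Complex.exp ((r:ℂ) * t * Complex.I))
    = if r = 0 then 2 else 2 * Real.sin r / r := by
  rcases eq_or_ne r 0 with h | h
  · simp [h]; norm_num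
  · have hc : (r:ℂ) * Complex.I ≠ 0 := by
      simp [Complex.ext_iff, h, Complex.I_ne_zero]
    have := integral_exp_mul_complex (a := (-1:ℝ)) (b := 1) hc
    simp only [if_neg h]
    rw [show (fun t : ℝ => Complex.exp ((r:ℂ) * t * Complex.I))
        = fun t : ℝ => Complex.exp (((r:ℂ) * Complex.I) * t) by ext t; ring_nf] at *
    rw [this]
    have hsin : Complex.exp ((r:ℂ)*Complex.I) - Complex.exp (-((r:ℂ)*Complex.I))
        = 2 * Complex.sin r * Complex.I := by
      rw [Complex.sin]; simp only [neg_mul]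
      linear_combination (Complex.exp ((r:ℂ)*Complex.I) - Complex.exp (-((r:ℂ)*Complex.I))) * Complex.I_sq
    have hr : (r:ℂ) ≠ 0 := by exact_mod_cast h
    rw [show ((r:ℂ) * Complex.I) * (1:ℝ) = (r:ℂ)*Complex.I by push_cast; ring,
        show ((r:ℂ) * Complex.I) * ((-1:ℝ):ℂ) = -((r:ℂ)*Complex.I) by push_cast; ring,
        hsin]
    rw [div_eq_iff hc]
    push_cast [← Complex.ofReal_sin]
    field_simp [hr]

lemma key_real (x : ℝ) :
    ((if Real.pi/2 - x = 0 then (2:ℝ) else 2 * Real.sin (Real.pi/2 - x) / (Real.pi/2 - x))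
      + (if -(Real.pi/2) - x = 0 then (2:ℝ)
          else 2 * Real.sin (-(Real.pi/2) - x) / (-(Real.pi/2) - x))) / 2
    = 2 * Real.pi * Kker x := by
  have hpi := Real.pi_ne_zero
  rcases eq_or_ne x (Real.pi/2) with h1 | h1
  · subst h1
    rw [sub_self, if_pos rfl, show -(Real.pi/2) - Real.pi/2 = -Real.pi by ring,
      if_neg (by simp [hpi])]
    simp [Kker, Real.sin_neg, Real.sin_pi]
    field_simp
  · rcases eq_or_ne x (-(Real.pi/2)) with h2 | h2
    · subst h2
      rw [show Real.pi/2 - -(Real.pi/2) = Real.pi by ring, if_neg hpi,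
        show -(Real.pi/2) - -(Real.pi/2) = 0 by ring, if_pos rfl, Real.sin_pi]
      rw [Kker, if_pos (Or.inr rfl)]
      field_simp
      ring
    · have hr1 : Real.pi/2 - x ≠ 0 := sub_ne_zero.2 (Ne.symm h1)
      have h3 : Real.pi/2 + x ≠ 0 := by
        intro h; apply h2; linarith
      have hr2 : -(Real.pi/2) - x ≠ 0 := by intro h; apply h3; linarith
      rw [if_neg hr1, if_neg hr2, Real.sin_pi_div_two_sub,
        show -(Real.pi/2) - x = -(x + Real.pi/2) by ring, Real.sin_neg,
        Real.sin_add_pi_div_two]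
      rw [Kker, if_neg (by tauto)]
      have hd : Real.pi^2 - 4*x^2 ≠ 0 := by
        intro h
        have : (Real.pi/2 - x) * (Real.pi/2 + x) = 0 := by nlinarith
        rcases mul_eq_zero.1 this with h' | h'
        · exact hr1 h'
        · exact h3 h'
      rw [show (2 * Real.cos x / (Real.pi/2 - x) + 2 * -Real.cos x / -(x + Real.pi/2))
          = 2 * Real.cos x / (Real.pi/2 - x) + 2 * Real.cos x / (Real.pi/2 + x) by
        rw [mul_neg, neg_div_neg_eq, add_comm x]]
      rw [div_add_div _ _ hr1 h3, div_div, mul_div_assoc' (2*Real.pi),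
        div_eq_div_iff (by exact mul_ne_zero (mul_ne_zero hr1 h3) two_ne_zero) hd]
      ring

lemma fourier_gfun (ξ : ℝ) :
    (𝓕 gfun) ξ = ((2 * Real.pi * Kker (2 * Real.pi * ξ) : ℝ) : ℂ) := by
  rw [Real.fourier_real_eq_integral_exp_smul]
  have hsupp : Function.support
      (fun v : ℝ => Complex.exp (↑(-2 * Real.pi * v * ξ) * Complex.I) • gfun v)
      ⊆ Set.Ioc (-1 : ℝ) 1 := by
    intro v hv
    rw [Function.mem_support] at hv
    by_contra hmem
    rcases eq_or_ne v (-1) with rfl | hne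
    · apply hv
      simp [gfun, Real.cos_pi_div_two, mul_div_assoc, neg_div, Real.cos_neg,
        show Real.pi * -1 / 2 = -(Real.pi/2) by ring]
    · have : gfun v = 0 := by
        apply gfun_supp
        intro hIcc
        exact hmem ⟨lt_of_le_of_ne hIcc.1 (Ne.symm hne), hIcc.2⟩
      simp [this] at hv
  rw [← intervalIntegral.integral_eq_integral_of_support_subset hsupp]
  have hptwise : ∀ v ∈ Set.uIcc (-1:ℝ) 1,
      Complex.exp (↑(-2 * Real.pi * v * ξ) * Complex.I) • gfun v
      = (Complex.exp (((Real.pi/2 - 2*Real.pi*ξ : ℝ):ℂ) * v * Complex.I)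
        + Complex.exp (((-(Real.pi/2) - 2*Real.pi*ξ : ℝ):ℂ) * v * Complex.I)) / 2 := by
    intro v hv
    rw [Set.uIcc_of_le (by norm_num)] at hv
    have h1 : |v| ≤ 1 := abs_le.2 ⟨hv.1, hv.2⟩
    have e1 : ((-2 * Real.pi * v * ξ : ℝ):ℂ) * Complex.I
        + ((Real.pi * v / 2 : ℝ):ℂ) * Complex.I
        = ((Real.pi/2 - 2*Real.pi*ξ : ℝ):ℂ) * v * Complex.I := by push_cast; ring
    have e2 : ((-2 * Real.pi * v * ξ : ℝ):ℂ) * Complex.I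
        + -(((Real.pi * v / 2 : ℝ):ℂ)) * Complex.I
        = ((-(Real.pi/2) - 2*Real.pi*ξ : ℝ):ℂ) * v * Complex.I := by push_cast; ring
    rw [smul_eq_mul, gfun, if_pos h1, Complex.ofReal_cos, Complex.cos, ← mul_div_assoc,
      mul_add, ← Complex.exp_add, ← Complex.exp_add, e1, e2]
  rw [intervalIntegral.integral_congr hptwise]
  have hi1 : IntervalIntegrable
      (fun v : ℝ => Complex.exp (((Real.pi/2 - 2*Real.pi*ξ : ℝ):ℂ) * v * Complex.I))
      volume (-1) 1 := (Continuous.intervalIntegrable (by fun_prop) _ _)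
  have hi2 : IntervalIntegrable
      (fun v : ℝ => Complex.exp (((-(Real.pi/2) - 2*Real.pi*ξ : ℝ):ℂ) * v * Complex.I))
      volume (-1) 1 := (Continuous.intervalIntegrable (by fun_prop) _ _)
  rw [intervalIntegral.integral_div, intervalIntegral.integral_add hi1 hi2,
    exp_int, exp_int]
  have := key_real (2 * Real.pi * ξ)
  rw [show Real.pi/2 - 2*Real.pi*ξ = Real.pi/2 - (2*Real.pi*ξ) by ring,
    show -(Real.pi/2) - 2*Real.pi*ξ = -(Real.pi/2) - (2*Real.pi*ξ) by ring] at *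
  rw [← this]
  push_cast
  split_ifs <;> push_cast <;> ring

lemma Kker_cont : Continuous Kker := by
  have hF : Continuous (𝓕 gfun) :=
    VectorFourier.fourierIntegral_continuous Real.continuous_fourierChar
      (by exact (continuous_inner : Continuous fun p : ℝ × ℝ => (inner ℝ p.1 p.2 : ℝ))) gfun_integrable
  have heq : Kker = fun x => ((𝓕 gfun) (x / (2 * Real.pi))).re / (2 * Real.pi) := by
    funext x
    rw [fourier_gfun, show 2 * Real.pi * (x / (2 * Real.pi)) = x by
      field_simp]
    rw [Complex.ofReal_re]
    field_simp
  rw [heq]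
  exact (Complex.continuous_re.comp (hF.comp (continuous_id.div_const _))).div_const _

lemma Kker_bound {x : ℝ} (hx : Real.pi < |x|) :
    ‖Kker x‖ ≤ 3 * (1 + ‖x‖) ^ (-(2:ℝ)) := by
  have hpi := Real.pi_gt_three
  have hx1 : (3:ℝ) < |x| := lt_trans hpi hx
  have hne : ¬(x = Real.pi / 2 ∨ x = -(Real.pi / 2)) := by
    rintro (rfl | rfl)
    · rw [abs_of_pos (by positivity)] at hx; linarith
    · rw [abs_neg, abs_of_pos (by positivity)] at hx; linarith
  rw [Kker, if_neg hne]
  have hx2 : Real.pi ^ 2 < x ^ 2 := by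
    have := sq_abs x
    nlinarith [abs_nonneg x, Real.pi_pos]
  have hd : Real.pi ^ 2 - 4 * x ^ 2 < 0 := by nlinarith
  have h1 : ‖2 * Real.cos x / (Real.pi ^ 2 - 4 * x ^ 2)‖ ≤ 2 / (3 * x ^ 2) := by
    rw [norm_div, norm_mul]
    apply div_le_div₀ (by positivity)
    · simp only [Real.norm_eq_abs]
      calc |2| * |Real.cos x| ≤ 2 * 1 := by
            rw [abs_two]
            exact mul_le_mul_of_nonneg_left (Real.abs_cos_le_one x) (by norm_num)
        _ = 2 := by ring
    · nlinarith
    · rw [Real.norm_eq_abs, abs_of_neg hd]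
      nlinarith
  refine h1.trans ?_
  rw [Real.rpow_neg (by positivity), show ((2:ℝ)) = ((2:ℕ):ℝ) by norm_num,
    Real.rpow_natCast]
  rw [Real.norm_eq_abs, ← div_eq_mul_inv,
    div_le_div_iff₀ (by nlinarith) (by positivity)]
  have h9 : 3 * |x| < |x| * |x| := by nlinarith
  push_cast
  nlinarith [sq_abs x, h9, abs_nonneg x]


lemma Kker_integrable : Integrable Kker := by
  have h1 : IntegrableOn Kker (Icc (-Real.pi) Real.pi) := Kker_cont.integrableOn_Icc
  have hmaj : Integrable (fun x : ℝ => 3 * (1 + ‖x‖) ^ (-(2:ℝ))) :=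
    (integrable_one_add_norm (by norm_num)).const_mul 3
  have hsmeas : MeasurableSet ((Icc (-Real.pi) Real.pi)ᶜ : Set ℝ) :=
    measurableSet_Icc.compl
  have h2 : IntegrableOn Kker ((Icc (-Real.pi) Real.pi)ᶜ) := by
    apply Integrable.mono' hmaj.integrableOn
      (Kker_cont.aestronglyMeasurable.restrict)
    apply ae_restrict_of_forall_mem hsmeas
    intro x hx
    apply Kker_bound
    rw [Set.mem_compl_iff, Set.mem_Icc, not_and_or] at hx
    rcases hx with h | h
    · push_neg at h
      calc Real.pi < -x := by linarith
        _ ≤ |x| := neg_le_abs x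
    · push_neg at h
      exact lt_of_lt_of_le h (le_abs_self x)
  have := h1.union h2
  rw [Set.union_compl_self] at this
  exact integrableOn_univ.mp this

lemma Fg_integrable : Integrable (𝓕 gfun) := by
  have h2pi : (2 * Real.pi) ≠ 0 := by positivity
  rw [show (𝓕 gfun) = fun ξ => ((2 * Real.pi * Kker (2 * Real.pi * ξ) : ℝ) : ℂ) from
    funext fourier_gfun]
  exact ((Kker_integrable.comp_mul_left' h2pi).const_mul (2 * Real.pi)).ofReal

lemma main_int (t : ℝ) :
    (∫ x : ℝ, Complex.exp (-(Complex.I * x * t)) * (Kker x : ℂ)) = gfun t := by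
  set F : ℝ → ℂ := fun x => Complex.exp (-(Complex.I * x * t)) * (Kker x : ℂ) with hF
  have h2pi : (0:ℝ) < 2 * Real.pi := by positivity
  have h1 := MeasureTheory.Measure.integral_comp_mul_left F (2 * Real.pi)
  rw [abs_of_pos (inv_pos.2 h2pi)] at h1
  have h2 : (∫ x, F x) = (2 * Real.pi) • ∫ ξ, F (2 * Real.pi * ξ) := by
    rw [h1, smul_smul, mul_inv_cancel₀ h2pi.ne', one_smul]
  have h3 : ∀ ξ : ℝ, F (2 * Real.pi * ξ)
      = (2 * Real.pi : ℝ)⁻¹ •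
        (Complex.exp (((-2 * Real.pi * ξ * t : ℝ):ℂ) * Complex.I) • (𝓕 gfun) ξ) := by
    intro ξ
    rw [hF]
    simp only [fourier_gfun, smul_eq_mul, Complex.real_smul]
    rw [show -(Complex.I * ((2 * Real.pi * ξ : ℝ):ℂ) * (t:ℂ))
      = ((-2 * Real.pi * ξ * t : ℝ):ℂ) * Complex.I by push_cast; ring]
    push_cast
    have : ((Real.pi:ℂ)) ≠ 0 := by exact_mod_cast Real.pi_ne_zero
    field_simp
  rw [h2]
  simp only [h3]
  rw [integral_smul, smul_smul, mul_inv_cancel₀ h2pi.ne', one_smul]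
  have h4 : (∫ ξ : ℝ, Complex.exp (((-2 * Real.pi * ξ * t : ℝ):ℂ) * Complex.I) • (𝓕 gfun) ξ)
      = 𝓕 (𝓕 gfun) t := by
    rw [Real.fourier_real_eq_integral_exp_smul]
  rw [h4]
  have h5 : 𝓕⁻ (𝓕 gfun) (-t) = gfun (-t) :=
    gfun_integrable.fourierInv_fourier_eq Fg_integrable gfun_cont.continuousAt
  rw [Real.fourierInv_eq_fourier_neg, neg_neg] at h5
  rw [h5]
  simp only [gfun, abs_neg, show Real.pi * -t / 2 = -(Real.pi * t / 2) from by ring,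
    Real.cos_neg]

/-- `K ∈ L¹(ℝ)` and its Fourier transform (with the paper's convention
`K̂(t) = ∫ e^{−ixt} K(x) dx`) is `cos(πt/2)` for `|t| ≤ 1` and `0` for
`|t| ≥ 1`. -/
theorem kernel_fourier_transform :
    Integrable Kker ∧
    (∀ t : ℝ, |t| ≤ 1 →
      ∫ x : ℝ, Complex.exp (-(Complex.I * x * t)) * (Kker x : ℂ)
        = (Real.cos (Real.pi * t / 2) : ℂ)) ∧
    (∀ t : ℝ, 1 ≤ |t| →
      ∫ x : ℝ, Complex.exp (-(Complex.I * x * t)) * (Kker x : ℂ) = 0) := by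
  refine ⟨Kker_integrable, ?_, ?_⟩
  · intro t ht
    rw [main_int, gfun, if_pos ht]
  · intro t ht
    rw [main_int, gfun]
    rcases eq_or_lt_of_le ht with h | h
    · rw [if_pos h.symm.le]
      rcases (abs_eq (by norm_num : (0:ℝ) ≤ 1)).1 h.symm with rfl | rfl
      · simp [show Real.pi * 1 / 2 = Real.pi / 2 from by ring, Real.cos_pi_div_two]
      · simp [show Real.pi * (-1) / 2 = -(Real.pi / 2) from by ring, Real.cos_neg,
          Real.cos_pi_div_two, neg_div, Complex.cos_neg, Complex.cos_pi_div_two]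
    · rw [if_neg (not_le.2 h)]
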